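/- Let p be prime, A = ℤ/p, and F = Id + f_1 σ^{m_1}(Id + f_2 σ^{m_2}(⋯(Id + f_J σ^{m_J})⋯)) a linear cellular automaton on A^{ℤ^D} written as a nested polynomial of shifts, with f_j ∈ (ℤ/p)^× and m_j ∈ ℤ^D. Then for all N ∈ ℕ, F^N = ∑_{k ∈ L^J(N)} f_{(k)} σ^{⟨k,m⟩}, where L^J(N) = {(k_1,...,k_J) ∈ ℕ^J : k_J ≪ k_{J−1} ≪ ⋯ ≪ k_1 ≪ N}, ⟨k,m⟩ = k_1 m_1 + ⋯ + k_J m_J, and f_{(k)} = C(N,k_1) C(k_1,k_2) ⋯ C(k_{J−1},k_J) f_1^{k_1} ⋯ f_J^{k_J} mod p; all these coefficients f_{(k)} are nonzero in ℤ/p. -/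

import Mathlib

open scoped Classical

/-- Digitwise domination in base `p`: every base-`p` digit of `a` is at most
the corresponding digit of `b` (written `a ≪ b` in the paper). -/
def DigLe (p a b : ℕ) : Prop :=
  ∀ i : ℕ, (Nat.digits p a).getD i 0 ≤ (Nat.digits p b).getD i 0

/-- The nested linear cellular automaton
`F = Id + f₀ σ^{m₀}(Id + f₁ σ^{m₁}( ⋯ (Id + f_{J-1} σ^{m_{J-1}}) ⋯ ))`
on `(ℤ/p)^{ℤ^D}`, where `σ^v a = a (· + v)`; `nest p D J f m 0` is `F`. -/
noncomputable def nest (p D J : ℕ) (f : ℕ → ZMod p) (m : ℕ → Fin D → ℤ) :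
    ℕ → ((Fin D → ℤ) → ZMod p) → ((Fin D → ℤ) → ZMod p)
  | j, a => if h : j < J then fun n => a n + f j * nest p D J f m (j + 1) a (n + m j) else a
  termination_by j => J - j
  decreasing_by omega

/-- The Lucas set `L^J(N)` of tuples `(k₀,…,k_{J-1})` with
`k_{J-1} ≪ ⋯ ≪ k₀ ≪ N`. -/
noncomputable def lucasSet (p J N : ℕ) : Finset (Fin J → ℕ) :=
  (Fintype.piFinset fun _ : Fin J => Finset.range (N + 1)).filter
    (fun k => (∀ h : 0 < J, DigLe p (k ⟨0, h⟩) N) ∧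
      ∀ (i : ℕ) (h : i + 1 < J), DigLe p (k ⟨i + 1, h⟩) (k ⟨i, Nat.lt_of_succ_lt h⟩))

/-- The coefficient `f_{(k)} = C(N,k₀)C(k₀,k₁)⋯C(k_{J-2},k_{J-1}) f₀^{k₀}⋯f_{J-1}^{k_{J-1}}`
in `ℤ/p`. -/
noncomputable def lucasCoeff (p J : ℕ) (f : ℕ → ZMod p) (N : ℕ) (k : Fin J → ℕ) : ZMod p :=
  ∏ j : Fin J,
    ((Nat.choose (if hj : (j : ℕ) = 0 then N
        else k ⟨(j : ℕ) - 1, lt_of_le_of_lt (Nat.sub_le _ _) j.isLt⟩) (k j) : ℕ) : ZMod p) *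
      f j ^ (k j)

/-- Expansion of the powers of a nested linear CA on `(ℤ/p)^{ℤ^D}`:
`F^N = ∑_{k ∈ L^J(N)} f_{(k)} σ^{⟨k,m⟩}`, and all the coefficients `f_{(k)}`
are nonzero in `ℤ/p` provided each `f_j` is. -/
lemma getD_digits {p : ℕ} (hp : 1 < p) : ∀ (i n : ℕ), (Nat.digits p n).getD i 0 = n / p ^ i % p
  | 0, n => by
    rcases Nat.eq_zero_or_pos n with h | h
    · simp [h]
    · rw [Nat.digits_def' hp h]; simp
  | (i+1), n => by
    rcases Nat.eq_zero_or_pos n with h | h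
    · simp [h]
    · rw [Nat.digits_def' hp h]
      simp only [List.getD]
      show (Nat.digits p (n / p)).getD i 0 = _
      rw [getD_digits hp i (n / p), Nat.div_div_eq_div_mul, ← pow_succ']

lemma digLe_iff {p : ℕ} (hp : 1 < p) {a b : ℕ} :
    DigLe p a b ↔ ∀ i, a / p ^ i % p ≤ b / p ^ i % p := by
  unfold DigLe; simp_rw [getD_digits hp]

lemma DigLe.le' {p : ℕ} (hp : 1 < p) : ∀ {a b : ℕ}, DigLe p a b → a ≤ b := by
  intro a
  induction a using Nat.strong_induction_on with
  | _ a ih =>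
    intro b h
    rcases Nat.eq_zero_or_pos a with h0 | h0
    · omega
    rw [digLe_iff hp] at h
    have h1 : a % p ≤ b % p := by simpa using h 0
    have h2 : DigLe p (a / p) (b / p) := by
      rw [digLe_iff hp]
      intro i
      have := h (i + 1)
      simpa [Nat.div_div_eq_div_mul, ← pow_succ'] using this
    have h3 : a / p ≤ b / p := ih (a / p) (Nat.div_lt_self h0 hp) h2
    calc a = p * (a / p) + a % p := (Nat.div_add_mod a p).symm
    _ ≤ p * (b / p) + b % p := by gcongr
    _ = b := Nat.div_add_mod b p


lemma cast_choose_ne_zero_of_lt {p x y : ℕ} (hp : p.Prime) (hx : x < p) (hyx : y ≤ x) :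
    ((Nat.choose x y : ℕ) : ZMod p) ≠ 0 := by
  rw [Ne, ZMod.natCast_eq_zero_iff]
  intro hdvd
  have h1 : Nat.choose x y * (y.factorial * (x - y).factorial) = x.factorial := by
    rw [← mul_assoc]; exact Nat.choose_mul_factorial_mul_factorial hyx
  have : p ∣ x.factorial := h1 ▸ Dvd.dvd.mul_right hdvd _
  rw [Nat.Prime.dvd_factorial hp] at this
  omega

lemma lucas_ne_zero_iff {p : ℕ} (hp : p.Prime) (n k : ℕ) :
    ((Nat.choose n k : ℕ) : ZMod p) ≠ 0 ↔ DigLe p k n := by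
  haveI : Fact p.Prime := ⟨hp⟩
  have hp1 : 1 < p := hp.one_lt
  rcases le_or_gt k n with hkn | hkn
  swap
  · rw [Nat.choose_eq_zero_of_lt hkn]
    simp only [Nat.cast_zero, ne_eq, not_true_eq_false, false_iff]
    intro h
    exact absurd (DigLe.le' hp1 h) (by omega)
  have hn : n < p ^ (n + 1) :=
    lt_of_lt_of_le (Nat.lt_pow_self (n := n) hp1) (Nat.pow_le_pow_right (by omega) (by omega))
  have hk : k < p ^ (n + 1) := lt_of_le_of_lt hkn hn
  have hmod := Choose.choose_modEq_prod_range_choose_nat (p := p) hn hk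
  have hcast : ((Nat.choose n k : ℕ) : ZMod p)
      = ∏ i ∈ Finset.range (n + 1), ((Nat.choose (n / p ^ i % p) (k / p ^ i % p) : ℕ) : ZMod p) := by
    have := (ZMod.natCast_eq_natCast_iff _ _ _).mpr hmod
    rw [this]; push_cast; ring
  rw [hcast, Finset.prod_ne_zero_iff, digLe_iff hp1]
  constructor
  · intro h i
    rcases lt_or_ge i (n + 1) with hi | hi
    · have := h i (Finset.mem_range.mpr hi)
      by_contra hc
      rw [Nat.choose_eq_zero_of_lt (by omega)] at this
      simp at this
    · have : n / p ^ i = 0 := Nat.div_eq_of_lt (lt_of_lt_of_le hn (Nat.pow_le_pow_right (by omega) hi))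
      have hk0 : k / p ^ i = 0 := Nat.div_eq_of_lt (lt_of_lt_of_le hk (Nat.pow_le_pow_right (by omega) hi))
      simp [this, hk0]
  · intro h i _
    exact cast_choose_ne_zero_of_lt hp (Nat.mod_lt _ (by omega)) (h i)


noncomputable def act (p D : ℕ) (c : AddMonoidAlgebra (ZMod p) (Fin D → ℤ))
    (a : (Fin D → ℤ) → ZMod p) : (Fin D → ℤ) → ZMod p :=
  fun n => c.coeff.sum fun v r => r * a (n + v)

namespace act
variable {p D : ℕ}

lemma single (v : Fin D → ℤ) (r : ZMod p) (a : (Fin D → ℤ) → ZMod p) (n : Fin D → ℤ) :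
    act p D (AddMonoidAlgebra.single v r) a n = r * a (n + v) :=
  Finsupp.sum_single_index (by simp)

lemma zero (a : (Fin D → ℤ) → ZMod p) (n) : act p D 0 a n = 0 := by
  simp [act]

lemma add (c d : AddMonoidAlgebra (ZMod p) (Fin D → ℤ)) (a n) :
    act p D (c + d) a n = act p D c a n + act p D d a n :=
  Finsupp.sum_add_index (by simp) (by intros; ring)

lemma one (a : (Fin D → ℤ) → ZMod p) (n) : act p D 1 a n = a n := by
  rw [AddMonoidAlgebra.one_def, single]; simp

lemma mul (c d : AddMonoidAlgebra (ZMod p) (Fin D → ℤ)) (a n) :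
    act p D (c * d) a n = act p D c (act p D d a) n := by
  induction c using AddMonoidAlgebra.induction_linear with
  | zero => simp [zero]
  | add c1 c2 h1 h2 => rw [add_mul, add, h1, h2, add]
  | single v r =>
    induction d using AddMonoidAlgebra.induction_linear with
    | zero =>
      rw [mul_zero, zero, single]
      have : act p D 0 a = fun _ => (0 : ZMod p) := funext fun n => zero a n
      rw [this]; ring
    | add d1 d2 h1 h2 =>
      rw [mul_add, add, h1, h2, single, single, single]
      have : act p D (d1 + d2) a = fun n => act p D d1 a n + act p D d2 a n :=
        funext fun n => add d1 d2 a n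
      rw [this]; ring
    | single w s =>
      rw [AddMonoidAlgebra.single_mul_single, single, single, single, add_assoc]
      ring

lemma sum {ι : Type*} (s : Finset ι) (g : ι → AddMonoidAlgebra (ZMod p) (Fin D → ℤ)) (a n) :
    act p D (∑ i ∈ s, g i) a n = ∑ i ∈ s, act p D (g i) a n := by
  induction s using Finset.cons_induction with
  | empty => simp [zero]
  | cons i s hi ih => rw [Finset.sum_cons, add, ih, Finset.sum_cons]

end act


noncomputable def Qpoly (p D : ℕ) : (J : ℕ) → (ℕ → ZMod p) → (ℕ → Fin D → ℤ) →
    AddMonoidAlgebra (ZMod p) (Fin D → ℤ)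
  | 0, _, _ => 1
  | (J + 1), f, m =>
      1 + AddMonoidAlgebra.single (m 0) (f 0) *
        Qpoly p D J (fun i => f (i + 1)) (fun i => m (i + 1))

lemma nest_eq_act (p D J : ℕ) (f : ℕ → ZMod p) (m : ℕ → Fin D → ℤ) :
    ∀ (t j : ℕ), J - j = t → ∀ a n, nest p D J f m j a n =
      act p D (Qpoly p D t (fun i => f (j + i)) (fun i => m (j + i))) a n := by
  intro t
  induction t with
  | zero =>
    intro j hj a n
    rw [nest, dif_neg (by omega), Qpoly, act.one]
  | succ t ih =>
    intro j hj a n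
    have hjJ : j < J := by omega
    rw [nest, dif_pos hjJ]

    rw [Qpoly, act.add, act.one, act.mul, act.single]
    have ha : nest p D J f m (j + 1) a = act p D
        (Qpoly p D t (fun i => f ((j + 1) + i)) (fun i => m ((j + 1) + i))) a :=
      funext fun n' => ih (j + 1) (by omega) a n'
    have harith : ∀ i : ℕ, j + (i + 1) = (j + 1) + i := fun i => by omega
    have hf : (fun i => f (j + (i + 1))) = fun i => f ((j + 1) + i) := by
      funext i; rw [harith i]
    have hm : (fun i => m (j + (i + 1))) = fun i => m ((j + 1) + i) := by
      funext i; rw [harith i]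
    rw [hf, hm, ← ha]
    simp

lemma nest_zero_eq_act (p D J : ℕ) (f : ℕ → ZMod p) (m : ℕ → Fin D → ℤ) (a n) :
    nest p D J f m 0 a n = act p D (Qpoly p D J f m) a n := by
  have := nest_eq_act p D J f m J 0 (by omega) a n
  simpa using this

lemma iterate_nest (p D J : ℕ) (f : ℕ → ZMod p) (m : ℕ → Fin D → ℤ) (N : ℕ) (a n) :
    (nest p D J f m 0)^[N] a n = act p D ((Qpoly p D J f m) ^ N) a n := by
  induction N generalizing n with
  | zero => simp [act.one]
  | succ N ih =>
    rw [Function.iterate_succ_apply', pow_succ]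
    have h1 : ∀ n', (nest p D J f m 0)^[N] a n' = act p D ((Qpoly p D J f m) ^ N) a n' :=
      fun n' => ?_
    · rw [nest_zero_eq_act]
      have : (nest p D J f m 0)^[N] a = act p D ((Qpoly p D J f m) ^ N) a := funext h1
      rw [this, ← act.mul, mul_comm]
    · exact ih n'


lemma mem_lucasSet {p J N : ℕ} {k : Fin J → ℕ} :
    k ∈ lucasSet p J N ↔ (∀ j, k j ≤ N) ∧ (∀ h : 0 < J, DigLe p (k ⟨0, h⟩) N) ∧
      ∀ (i : ℕ) (h : i + 1 < J), DigLe p (k ⟨i + 1, h⟩) (k ⟨i, Nat.lt_of_succ_lt h⟩) := by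
  simp [lucasSet, Fintype.mem_piFinset, Nat.lt_succ_iff, and_assoc]

lemma cons_mk_succ {J : ℕ} (k0 : ℕ) (k' : Fin J → ℕ) (i : ℕ) (h : i + 1 < J + 1) :
    (Fin.cons k0 k' : Fin (J + 1) → ℕ) ⟨i + 1, h⟩ = k' ⟨i, Nat.lt_of_succ_lt_succ h⟩ := by
  rw [← Fin.succ_mk, Fin.cons_succ]

lemma cons_mk_zero {J : ℕ} (k0 : ℕ) (k' : Fin J → ℕ) (h : 0 < J + 1) :
    (Fin.cons k0 k' : Fin (J + 1) → ℕ) ⟨0, h⟩ = k0 := rfl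

lemma mem_lucasSet_cons {p J N : ℕ} (hp : 1 < p) (k0 : ℕ) (k' : Fin J → ℕ) :
    Fin.cons k0 k' ∈ lucasSet p (J + 1) N ↔
      (k0 ≤ N ∧ DigLe p k0 N) ∧ k' ∈ lucasSet p J k0 := by
  rw [mem_lucasSet, mem_lucasSet]
  constructor
  · rintro ⟨hb, h0, hc⟩
    have hd0 : DigLe p k0 N := by have := h0 (by omega); rwa [cons_mk_zero] at this
    have hk0N : k0 ≤ N := by have := hb 0; simpa using this
    -- every tail entry is ≤ k0
    have hle : ∀ (i : ℕ) (h : i < J), k' ⟨i, h⟩ ≤ k0 := by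
      intro i
      induction i with
      | zero =>
        intro h
        have := hc 0 (by omega)
        rw [cons_mk_succ, cons_mk_zero] at this
        exact DigLe.le' hp this
      | succ i ih =>
        intro h
        have := hc (i + 1) (by omega)
        rw [cons_mk_succ, cons_mk_succ] at this
        exact le_trans (DigLe.le' hp this) (ih (by omega))
    refine ⟨⟨hk0N, hd0⟩, fun j => ?_, fun h => ?_, fun i h => ?_⟩
    · have := hle j j.isLt; simpa using this
    · have := hc 0 (by omega)
      rw [cons_mk_succ, cons_mk_zero] at this
      exact this
    · have := hc (i + 1) (by omega)
      rw [cons_mk_succ, cons_mk_succ] at this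
      exact this
  · rintro ⟨⟨hk0N, hd0⟩, hb, h0, hc⟩
    refine ⟨fun j => ?_, fun h => ?_, fun i h => ?_⟩
    · rcases j with ⟨i, hi⟩
      cases i with
      | zero => rw [cons_mk_zero]; exact hk0N
      | succ i => rw [cons_mk_succ]; exact le_trans (hb _) hk0N
    · rw [cons_mk_zero]; exact hd0
    · cases i with
      | zero =>
        rw [cons_mk_succ, cons_mk_zero]
        exact h0 (by omega)
      | succ i =>
        rw [cons_mk_succ, cons_mk_succ]
        exact hc i (by omega)


lemma lucasCoeff_cons (p J : ℕ) (f : ℕ → ZMod p) (N : ℕ) (k0 : ℕ) (k' : Fin J → ℕ) :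
    lucasCoeff p (J + 1) f N (Fin.cons k0 k') =
      ((Nat.choose N k0 : ℕ) : ZMod p) * f 0 ^ k0 *
        lucasCoeff p J (fun i => f (i + 1)) k0 k' := by
  unfold lucasCoeff
  rw [Fin.prod_univ_succ]
  congr 1
  apply Finset.prod_congr rfl
  intro j _
  have key : ∀ hlt : (j : ℕ) < J + 1, (Fin.cons k0 k' : Fin (J + 1) → ℕ) ⟨(j : ℕ), hlt⟩
      = if (j : ℕ) = 0 then k0
        else k' ⟨(j : ℕ) - 1, lt_of_le_of_lt (Nat.sub_le _ _) j.isLt⟩ := by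
    intro hlt
    rcases Nat.eq_zero_or_pos (j : ℕ) with h0 | h0
    · rw [if_pos h0]
      rw [show (⟨(j : ℕ), hlt⟩ : Fin (J + 1)) = ⟨0, by omega⟩ from by ext; exact h0]
      rfl
    · rw [if_neg (by omega)]
      rw [show (⟨(j : ℕ), hlt⟩ : Fin (J + 1)) = ⟨((j : ℕ) - 1) + 1, by omega⟩ from by
        ext; simp; omega]
      rw [cons_mk_succ]
  simp only [Fin.cons_succ, Fin.val_succ, Nat.add_sub_cancel]
  rw [dif_neg (by omega)]
  rw [key]
  split_ifs with h0
  · simp [h0]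
  · rfl


lemma vec_cons {D J : ℕ} (m : ℕ → Fin D → ℤ) (k0 : ℕ) (k' : Fin J → ℕ) :
    (fun d => ∑ j : Fin (J + 1), ((Fin.cons k0 k' : Fin (J + 1) → ℕ) j : ℤ) * m j d)
      = k0 • m 0 + fun d => ∑ j : Fin J, (k' j : ℤ) * (fun i => m (i + 1)) (j : ℕ) d := by
  funext d
  rw [Fin.sum_univ_succ]
  simp [Fin.cons_succ, Fin.val_succ, nsmul_eq_mul]

theorem Qpow (p D : ℕ) (hp : p.Prime) (J : ℕ) (f : ℕ → ZMod p) (m : ℕ → Fin D → ℤ) (N : ℕ) :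
    (Qpoly p D J f m) ^ N = ∑ k ∈ lucasSet p J N,
      AddMonoidAlgebra.single (fun d => ∑ j : Fin J, (k j : ℤ) * m j d)
        (lucasCoeff p J f N k) := by
  induction J generalizing f m N with
  | zero =>
    have hset : lucasSet p 0 N = {fun i : Fin 0 => (i.elim0 : ℕ)} := by
      ext k
      simp only [Finset.mem_singleton]
      constructor
      · intro _; funext i; exact i.elim0
      · intro _
        refine Finset.mem_filter.mpr ⟨?_, fun h => absurd h (by omega), fun i h => by omega⟩
        exact Fintype.mem_piFinset.mpr fun j => j.elim0
    rw [hset, Finset.sum_singleton]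
    have hv : (fun d => ∑ j : Fin 0, (((fun i : Fin 0 => (i.elim0 : ℕ)) j : ℕ) : ℤ) * m j d)
        = (0 : Fin D → ℤ) := by funext d; simp
    have hc : lucasCoeff p 0 f N (fun i : Fin 0 => (i.elim0 : ℕ)) = 1 := by
      unfold lucasCoeff; simp
    rw [hv, hc, Qpoly, one_pow, AddMonoidAlgebra.one_def]
  | succ J ih =>
    rw [Qpoly, add_comm, add_pow]
    have step1 : ∀ k0 ∈ Finset.range (N + 1),
        (AddMonoidAlgebra.single (m 0) (f 0) *
            Qpoly p D J (fun i => f (i + 1)) (fun i => m (i + 1))) ^ k0 * 1 ^ (N - k0) *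
          (Nat.choose N k0 : AddMonoidAlgebra (ZMod p) (Fin D → ℤ)) =
        ∑ k' ∈ lucasSet p J k0,
          AddMonoidAlgebra.single
            (k0 • m 0 + fun d => ∑ j : Fin J, (k' j : ℤ) * (fun i => m (i + 1)) (j : ℕ) d)
            (((Nat.choose N k0 : ℕ) : ZMod p) * f 0 ^ k0 *
              lucasCoeff p J (fun i => f (i + 1)) k0 k') := by
      intro k0 _
      rw [one_pow, mul_one, mul_pow, AddMonoidAlgebra.single_pow, ih, Finset.mul_sum,
        Finset.sum_mul]
      apply Finset.sum_congr rfl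
      intro k' _
      rw [AddMonoidAlgebra.single_mul_single, AddMonoidAlgebra.natCast_def,
        AddMonoidAlgebra.single_mul_single, add_zero]
      congr 1
      ring
    rw [Finset.sum_congr rfl step1]
    -- restrict to k0 with DigLe p k0 N
    rw [← Finset.sum_filter_of_ne (p := fun k0 => DigLe p k0 N)
      (fun k0 _ hne => by
        by_contra hd
        apply hne
        have hz : ((Nat.choose N k0 : ℕ) : ZMod p) = 0 := by
          by_contra hz
          exact hd ((lucas_ne_zero_iff hp N k0).mp hz)
        apply Finset.sum_eq_zero
        intro k' _
        rw [hz, zero_mul, zero_mul, AddMonoidAlgebra.single_zero])]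
    -- reindex via sigma
    rw [Finset.sum_sigma']
    refine Finset.sum_bij' (fun x _ => Fin.cons x.1 x.2)
      (fun k _ => ⟨k 0, Fin.tail k⟩) ?_ ?_ ?_ ?_ ?_
    · rintro ⟨k0, k'⟩ hx
      simp only [Finset.mem_sigma, Finset.mem_filter, Finset.mem_range] at hx
      exact (mem_lucasSet_cons hp.one_lt k0 k').mpr ⟨⟨by omega, hx.1.2⟩, hx.2⟩
    · intro k hk
      simp only [Finset.mem_sigma, Finset.mem_filter, Finset.mem_range]
      have := (mem_lucasSet_cons hp.one_lt (k 0) (Fin.tail k)).mp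
        (by rwa [Fin.cons_self_tail])
      exact ⟨⟨by omega, this.1.2⟩, this.2⟩
    · rintro ⟨k0, k'⟩ _
      ext
      · simp
      · simp [Fin.tail_cons]
    · intro k _
      exact Fin.cons_self_tail k
    · rintro ⟨k0, k'⟩ _
      rw [← lucasCoeff_cons, ← vec_cons]


theorem nest_pow_expansion (p D J : ℕ) (hp : p.Prime)
    (f : ℕ → ZMod p) (m : ℕ → Fin D → ℤ) (hf : ∀ j < J, f j ≠ 0) (N : ℕ) :
    (∀ (a : (Fin D → ℤ) → ZMod p) (n : Fin D → ℤ),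
      (nest p D J f m 0)^[N] a n =
        ∑ k ∈ lucasSet p J N,
          lucasCoeff p J f N k * a (n + fun d => ∑ j : Fin J, (k j : ℤ) * m j d)) ∧
    ∀ k ∈ lucasSet p J N, lucasCoeff p J f N k ≠ 0 := by
  haveI : Fact p.Prime := ⟨hp⟩
  constructor
  · intro a n
    rw [iterate_nest, Qpow p D hp J f m N, act.sum]
    apply Finset.sum_congr rfl
    intro k _
    rw [act.single]
  · intro k hk
    have hmem := mem_lucasSet.mp hk
    unfold lucasCoeff
    rw [Finset.prod_ne_zero_iff]
    intro j _
    apply mul_ne_zero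
    · rcases Nat.eq_zero_or_pos (j : ℕ) with h0 | h0
      · rw [dif_pos h0]
        apply (lucas_ne_zero_iff hp _ _).mpr
        have hJ : 0 < J := h0 ▸ j.isLt
        have hd := hmem.2.1 hJ
        have hje : j = ⟨0, hJ⟩ := by ext; exact h0
        have h2 : k j = k ⟨0, hJ⟩ := congrArg k hje
        rw [h2]
        exact hd
      · rw [dif_neg (by omega)]
        apply (lucas_ne_zero_iff hp _ _).mpr
        have h1 : ((j : ℕ) - 1) + 1 < J := by omega
        have hd := hmem.2.2 ((j : ℕ) - 1) h1
        have hje : j = ⟨((j : ℕ) - 1) + 1, h1⟩ := by ext; simp; omega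
        have h2 : k j = k ⟨((j : ℕ) - 1) + 1, h1⟩ := congrArg k hje
        rw [h2]
        exact hd
    · exact pow_ne_zero _ (hf (j : ℕ) j.isLt)
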